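/- Let ρ ∈ (0,1), let π be a bounded probability density on [0,1], let p : {1,2,...} → [0,1] be a probability mass function (∑_{k≥1} p_k = 1) with probability generating function K̃(s) = ∑_{k≥1} p_k·s^k, let m > 0 and ζ > 0. Suppose f, f̂ : [0,1]² → ℝ are measurable and satisfy |f̂(x,y) − f(x,y)| ≤ ζ·π(x)·π(y)/(ρ·π(y) + 1−ρ) for all x, y ∈ [0,1]. For a function h : [0,1]² → ℝ define I(h) = ∫_0^1 [ρ·π(u) + 1−ρ]·∫_0^1 π(x)·K̃'( ∫*_{v=u}^{x} π(v) dv )·( ∫*_{y=u}^{x} h(y,u)·m·exp( ρ·∫*_{ξ=y}^{x} π(ξ) dξ ) dy ) dx du. Then |I(f̂) − I(f)| ≤ (m·ζ/ρ)·(e^ρ − 1). -/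

import Mathlib

open MeasureTheory

open Set
set_option maxHeartbeats 1000000

/-- Circular integral: `∫*_{u=a}^{b} h(u) du` on the circle `[0,1)`.
It equals `∫_a^b h` if `a ≤ b` and `∫_a^1 h + ∫_0^b h` if `a > b`. -/
noncomputable def cint (a b : ℝ) (h : ℝ → ℝ) : ℝ :=
  if a ≤ b then ∫ u in a..b, h u
  else (∫ u in a..(1 : ℝ), h u) + ∫ u in (0 : ℝ)..b, h u


lemma aux_push (π : ℝ → ℝ) (hmeas : Measurable π) (hnn : ∀ x, 0 ≤ π x)
    (hint : Integrable π) (a b : ℝ) (hab : a ≤ b) (θ : ℝ)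
    (g : ℝ → ENNReal) (hg : Measurable g) :
    ∫⁻ w in Set.Ioc a b, ENNReal.ofReal (π w) * g (θ + ∫ t in a..w, π t) =
      ∫⁻ t in Set.Ioc θ (θ + ∫ t in a..b, π t), g t := by
  set G : ℝ → ℝ := fun w => ∫ t in a..w, π t with hG
  have hGc : Continuous G := hint.continuous_primitive a
  have hGmono : Monotone G := by
    intro w₁ w₂ h
    have h1 : G w₂ - G w₁ = ∫ t in w₁..w₂, π t := by
      rw [hG]
      simp only
      rw [← intervalIntegral.integral_add_adjacent_intervals
        (hint.intervalIntegrable) (hint.intervalIntegrable) (b := w₁) (c := w₂)]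
      ring
    have h2 : (0:ℝ) ≤ ∫ t in w₁..w₂, π t :=
      intervalIntegral.integral_nonneg (μ := volume) h (fun u _ => hnn u)
    linarith
  have hGa : G a = 0 := intervalIntegral.integral_same
  have hGnn : ∀ w, a ≤ w → 0 ≤ G w := fun w hw => hGa ▸ hGmono hw
  set Φ : ℝ → ℝ := fun w => θ + G w with hΦdef
  have hΦc : Continuous Φ := continuous_const.add hGc
  have hΦm : Measurable Φ := hΦc.measurable
  set ν : Measure ℝ := (volume.restrict (Set.Ioc a b)).withDensity
      (fun w => ENNReal.ofReal (π w)) with hν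
  have hνapp : ∀ s : Set ℝ, MeasurableSet s →
      ν s = ∫⁻ w in s ∩ Set.Ioc a b, ENNReal.ofReal (π w) := by
    intro s hs
    rw [hν, withDensity_apply _ hs, Measure.restrict_restrict hs]
  have hνIoc : ∀ s : ℝ, a ≤ s → s ≤ b →
      (∫⁻ w in Set.Ioc a s, ENNReal.ofReal (π w)) = ENNReal.ofReal (G s) := by
    intro s has hsb
    rw [← ofReal_integral_eq_lintegral_ofReal (hint.integrableOn)
      (Filter.Eventually.of_forall hnn)]
    congr 1
    rw [hG]
    simp only
    rw [intervalIntegral.integral_of_le has]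
  have hfinν : IsFiniteMeasure ν := by
    constructor
    rw [hνapp _ MeasurableSet.univ, Set.univ_inter]
    calc ∫⁻ w in Set.Ioc a b, ENNReal.ofReal (π w)
        ≤ ∫⁻ w, ENNReal.ofReal (π w) := setLIntegral_le_lintegral _ _
      _ < ⊤ := by
          rw [← hasFiniteIntegral_iff_ofReal (Filter.Eventually.of_forall hnn)]
          exact hint.hasFiniteIntegral
  have hfinmap : IsFiniteMeasure (Measure.map Φ ν) := by
    constructor
    rw [Measure.map_apply hΦm MeasurableSet.univ]
    exact measure_lt_top ν _
  have hmap : Measure.map Φ ν = volume.restrict (Set.Ioc θ (θ + G b)) := by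
    haveI := hfinmap
    refine Measure.ext_of_Iic (Measure.map Φ ν)
      (volume.restrict (Set.Ioc θ (θ + G b))) ?_
    intro t
    rw [Measure.map_apply hΦm measurableSet_Iic,
      Measure.restrict_apply' measurableSet_Ioc,
      hνapp _ (hΦm measurableSet_Iic)]
    rcases lt_or_ge t θ with ht | ht
    · have h1 : Φ ⁻¹' Set.Iic t ∩ Set.Ioc a b = ∅ := by
        ext w
        simp only [Set.mem_inter_iff, Set.mem_preimage, Set.mem_Iic, Set.mem_Ioc,
          Set.mem_empty_iff_false, iff_false]
        rintro ⟨hw1, hw2, hw3⟩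
        have := hGnn w hw2.le
        simp only [hΦdef] at hw1
        linarith
      have h2 : Set.Iic t ∩ Set.Ioc θ (θ + G b) = ∅ := by
        ext w
        simp only [Set.mem_inter_iff, Set.mem_Iic, Set.mem_Ioc, Set.mem_empty_iff_false,
          iff_false]
        rintro ⟨hw1, hw2, hw3⟩
        linarith
      rw [h1, h2]
      simp
    · -- t ≥ θ
      set τ := t - θ with hτ
      have hτ0 : 0 ≤ τ := by simp only [hτ]; linarith
      set sset := {w : ℝ | w ∈ Set.Icc a b ∧ G w ≤ τ} with hsset
      have hane : a ∈ sset := ⟨⟨le_rfl, hab⟩, by rw [hGa]; exact hτ0⟩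
      have hbdd : BddAbove sset := ⟨b, fun w hw => hw.1.2⟩
      have hclosed : IsClosed sset := by
        have h : sset = Set.Icc a b ∩ G ⁻¹' Set.Iic τ := rfl
        rw [h]
        exact isClosed_Icc.inter (isClosed_Iic.preimage hGc)
      set s := sSup sset with hs
      have hsmem : s ∈ sset := hclosed.csSup_mem ⟨a, hane⟩ hbdd
      have has : a ≤ s := le_csSup hbdd hane
      have hsb : s ≤ b := csSup_le ⟨a, hane⟩ (fun w hw => hw.1.2)
      have hGsτ : G s ≤ τ := hsmem.2
      have hpre : Φ ⁻¹' Set.Iic t ∩ Set.Ioc a b = Set.Ioc a s := by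
        ext w
        simp only [Set.mem_inter_iff, Set.mem_preimage, Set.mem_Iic, Set.mem_Ioc, hΦdef]
        constructor
        · rintro ⟨hw1, hw2, hw3⟩
          exact ⟨hw2, le_csSup hbdd ⟨⟨hw2.le, hw3⟩, by linarith⟩⟩
        · rintro ⟨hw1, hw2⟩
          have := hGmono hw2
          exact ⟨by linarith [hGsτ], hw1, le_trans hw2 hsb⟩
      have hGs : G s = min (G b) τ := by
        rcases le_or_gt (G b) τ with hGb | hGb
        · have hbs : b ∈ sset := ⟨⟨hab, le_rfl⟩, hGb⟩
          have h : s = b := le_antisymm hsb (le_csSup hbdd hbs)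
          rw [h, min_eq_left hGb]
        · rw [min_eq_right hGb.le]
          refine le_antisymm hGsτ ?_
          by_contra hlt
          push_neg at hlt
          have hsltb : s < b := by
            rcases eq_or_lt_of_le hsb with heq | h
            · rw [heq] at hGsτ; exact absurd hGsτ (not_le.2 hGb)
            · exact h
          have hopen : {w : ℝ | G w < τ} ∈ nhds s :=
            (isOpen_lt hGc continuous_const).mem_nhds hlt
          rcases Metric.mem_nhds_iff.1 hopen with ⟨δ, hδ, hball⟩
          set w := min b (s + δ / 2) with hw
          have hsw : s < w := lt_min hsltb (by linarith)
          have hwb : w ≤ b := min_le_left _ _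
          have hwball : w ∈ Metric.ball s δ := by
            rw [Metric.mem_ball, Real.dist_eq, abs_lt]
            constructor
            · linarith
            · have : w ≤ s + δ / 2 := min_le_right _ _
              linarith
          have hwin : w ∈ sset := ⟨⟨le_trans has hsw.le, hwb⟩, le_of_lt (hball hwball)⟩
          exact absurd (le_csSup hbdd hwin) (not_le.2 hsw)
      have hIic : Set.Iic t ∩ Set.Ioc θ (θ + G b) = Set.Ioc θ (min (θ + G b) t) := by
        rw [Set.inter_comm, Set.Ioc_inter_Iic]
      rw [hpre, hνIoc s has hsb, hIic, Real.volume_Ioc, hGs]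
      have hmm : min (G b) τ = min (θ + G b) t - θ := by
        rcases le_total (G b) τ with h | h
        · rw [min_eq_left h, min_eq_left (by linarith : θ + G b ≤ t)]; ring
        · rw [min_eq_right h, min_eq_right (by linarith : t ≤ θ + G b), hτ]
      rw [hmm]
  have hstep : (∫⁻ w, g (Φ w) ∂ν) =
      ∫⁻ w in Set.Ioc a b, ENNReal.ofReal (π w) * g (θ + ∫ t in a..w, π t) := by
    calc (∫⁻ w, g (Φ w) ∂ν)
        = ∫⁻ w, ((fun w => ENNReal.ofReal (π w)) * (g ∘ Φ)) w
            ∂(volume.restrict (Set.Ioc a b)) :=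
          lintegral_withDensity_eq_lintegral_mul _ hmeas.ennreal_ofReal (hg.comp hΦm)
      _ = ∫⁻ w in Set.Ioc a b, ENNReal.ofReal (π w) * g (θ + ∫ t in a..w, π t) :=
          lintegral_congr fun w => rfl
  rw [← hstep, ← lintegral_map hg hΦm, hmap]

lemma cint_congr {F F' : ℝ → ℝ} (hFF' : Set.EqOn F F' (Set.Icc (0:ℝ) 1))
    {a b : ℝ} (ha : a ∈ Set.Icc (0:ℝ) 1) (hb : b ∈ Set.Icc (0:ℝ) 1) :
    cint a b F = cint a b F' := by
  have key : ∀ c d : ℝ, c ∈ Set.Icc (0:ℝ) 1 → d ∈ Set.Icc (0:ℝ) 1 →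
      (∫ u in c..d, F u) = ∫ u in c..d, F' u := by
    intro c d hc hd
    apply intervalIntegral.integral_congr
    intro y hy
    apply hFF'
    rcases hy with ⟨h1, h2⟩
    constructor
    · exact le_trans (le_min hc.1 hd.1) h1
    · exact le_trans h2 (max_le hc.2 hd.2)
  unfold cint
  rcases le_or_gt a b with h | h
  · rw [if_pos h, if_pos h, key a b ha hb]
  · rw [if_neg (not_le.2 h), if_neg (not_le.2 h), key a 1 ha (by norm_num),
      key 0 b (by norm_num) hb]

lemma cint_mem (π : ℝ → ℝ) (hnn : ∀ x, 0 ≤ π x) (hint : Integrable π)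
    (hπ1 : (∫ t in (0:ℝ)..1, π t) = 1)
    {a b : ℝ} (ha : a ∈ Set.Icc (0:ℝ) 1) (hb : b ∈ Set.Icc (0:ℝ) 1) :
    cint a b π ∈ Set.Icc (0:ℝ) 1 := by
  have II : ∀ c d : ℝ, IntervalIntegrable π volume c d := fun c d => hint.intervalIntegrable
  have hnn' : ∀ c d : ℝ, c ≤ d → (0:ℝ) ≤ ∫ t in c..d, π t := fun c d h =>
    intervalIntegral.integral_nonneg (μ := volume) h (fun u _ => hnn u)
  unfold cint
  rcases le_or_gt a b with h | h
  · rw [if_pos h]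
    have h1 : (∫ t in (0:ℝ)..a, π t) + ((∫ t in a..b, π t) + ∫ t in b..1, π t) = 1 := by
      rw [intervalIntegral.integral_add_adjacent_intervals (II a b) (II b 1),
        intervalIntegral.integral_add_adjacent_intervals (II 0 a) (II a 1), hπ1]
    constructor
    · exact hnn' a b h
    · nlinarith [hnn' 0 a ha.1, hnn' b 1 hb.2]
  · rw [if_neg (not_le.2 h)]
    have h1 : (∫ t in (0:ℝ)..b, π t) + ((∫ t in b..a, π t) + ∫ t in a..1, π t) = 1 := by
      rw [intervalIntegral.integral_add_adjacent_intervals (II b a) (II a 1),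
        intervalIntegral.integral_add_adjacent_intervals (II 0 b) (II b 1), hπ1]
    constructor
    · nlinarith [hnn' a 1 ha.2, hnn' 0 b hb.1]
    · nlinarith [hnn' b a h.le]

lemma cint_circle (π : ℝ → ℝ) (hint : Integrable π)
    (hπ1 : (∫ t in (0:ℝ)..1, π t) = 1)
    {a b : ℝ} (ha : a ∈ Set.Icc (0:ℝ) 1) (hb : b ∈ Set.Icc (0:ℝ) 1) (hne : a ≠ b) :
    cint a b π + cint b a π = 1 := by
  have II : ∀ c d : ℝ, IntervalIntegrable π volume c d := fun c d => hint.intervalIntegrable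
  unfold cint
  rcases lt_or_gt_of_ne hne with h | h
  · rw [if_pos h.le, if_neg (not_le.2 h)]
    have h1 : (∫ t in (0:ℝ)..a, π t) + ((∫ t in a..b, π t) + ∫ t in b..1, π t) = 1 := by
      rw [intervalIntegral.integral_add_adjacent_intervals (II a b) (II b 1),
        intervalIntegral.integral_add_adjacent_intervals (II 0 a) (II a 1), hπ1]
    linarith
  · rw [if_neg (not_le.2 h), if_pos h.le]
    have h1 : (∫ t in (0:ℝ)..b, π t) + ((∫ t in b..a, π t) + ∫ t in a..1, π t) = 1 := by
      rw [intervalIntegral.integral_add_adjacent_intervals (II b a) (II a 1),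
        intervalIntegral.integral_add_adjacent_intervals (II 0 b) (II b 1), hπ1]
    linarith

lemma cint_meas (π : ℝ → ℝ) (hint : Integrable π) :
    Measurable (fun q : ℝ × ℝ => cint q.1 q.2 π) := by
  set P : ℝ → ℝ := fun w => ∫ t in (0:ℝ)..w, π t with hP
  have hPc : Continuous P := hint.continuous_primitive 0
  have key : ∀ c d : ℝ, (∫ t in c..d, π t) = P d - P c := by
    intro c d
    rw [hP]
    simp only
    rw [← intervalIntegral.integral_add_adjacent_intervals
      (hint.intervalIntegrable) (hint.intervalIntegrable) (a := (0:ℝ)) (b := c) (c := d)]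
    ring
  have hfun : (fun q : ℝ × ℝ => cint q.1 q.2 π) =
      fun q : ℝ × ℝ => if q.1 ≤ q.2 then P q.2 - P q.1 else (P 1 - P q.1) + (P q.2 - P 0) := by
    funext q
    unfold cint
    rcases le_or_gt q.1 q.2 with h | h
    · rw [if_pos h, if_pos h, key]
    · rw [if_neg (not_le.2 h), if_neg (not_le.2 h), key, key]
  rw [hfun]
  refine Measurable.ite (measurableSet_le measurable_fst measurable_snd) ?_ ?_
  · exact ((hPc.comp continuous_snd).sub (hPc.comp continuous_fst)).measurable
  · exact (((continuous_const).sub (hPc.comp continuous_fst)).add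
      ((hPc.comp continuous_snd).sub continuous_const)).measurable

lemma aux_sub (π : ℝ → ℝ) (hmeas : Measurable π) (hnn : ∀ x, 0 ≤ π x)
    (hint : Integrable π) (hπ1 : (∫ t in (0:ℝ)..1, π t) = 1)
    {a : ℝ} (ha : a ∈ Set.Icc (0:ℝ) 1) (g : ℝ → ENNReal) (hg : Measurable g) :
    (∫⁻ w in Set.Ioc (0:ℝ) 1, ENNReal.ofReal (π w) * g (cint a w π)) ≤
      ∫⁻ t in Set.Ioc (0:ℝ) 1, g t := by
  have II : ∀ c d : ℝ, IntervalIntegrable π volume c d := fun c d => hint.intervalIntegrable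
  set θ : ℝ := ∫ t in a..1, π t with hθ
  have hθ0 : 0 ≤ θ :=
    intervalIntegral.integral_nonneg (μ := volume) ha.2 (fun u _ => hnn u)
  have hsplit : (∫ t in (0:ℝ)..a, π t) + θ = 1 := by
    rw [hθ, intervalIntegral.integral_add_adjacent_intervals (II 0 a) (II a 1), hπ1]
  have hθ1 : θ ≤ 1 := by
    nlinarith [intervalIntegral.integral_nonneg (μ := volume) ha.1 (fun u _ => hnn u)]
  -- split domain
  have hdecomp : (∫⁻ w in Set.Ioc (0:ℝ) 1, ENNReal.ofReal (π w) * g (cint a w π)) =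
      (∫⁻ w in Set.Ioc (0:ℝ) a, ENNReal.ofReal (π w) * g (cint a w π)) +
      ∫⁻ w in Set.Ioc a 1, ENNReal.ofReal (π w) * g (cint a w π) := by
    rw [← lintegral_union measurableSet_Ioc (Set.Ioc_disjoint_Ioc_of_le le_rfl),
      Set.Ioc_union_Ioc_eq_Ioc ha.1 ha.2]
  rw [hdecomp]
  -- second piece : w ∈ Ioc a 1, a ≤ w
  have hpiece2 : (∫⁻ w in Set.Ioc a 1, ENNReal.ofReal (π w) * g (cint a w π)) =
      ∫⁻ t in Set.Ioc (0:ℝ) θ, g t := by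
    have hcongr : (∫⁻ w in Set.Ioc a 1, ENNReal.ofReal (π w) * g (cint a w π)) =
        ∫⁻ w in Set.Ioc a 1, ENNReal.ofReal (π w) * g ((0:ℝ) + ∫ t in a..w, π t) := by
      apply setLIntegral_congr_fun measurableSet_Ioc
      intro w hw
      have : cint a w π = (0:ℝ) + ∫ t in a..w, π t := by
        unfold cint
        rw [if_pos hw.1.le, zero_add]
      simp only [this]
    rw [hcongr, aux_push π hmeas hnn hint a 1 ha.2 0 g hg, zero_add, ← hθ]
  -- first piece : w ∈ Ioo 0 a, w < a
  have hpiece1 : (∫⁻ w in Set.Ioc (0:ℝ) a, ENNReal.ofReal (π w) * g (cint a w π)) =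
      ∫⁻ t in Set.Ioc θ 1, g t := by
    rw [setLIntegral_congr ((Ioo_ae_eq_Ioc
      (μ := (volume : Measure ℝ)) (a := (0:ℝ)) (b := a)).symm)]
    have hcongr : (∫⁻ w in Set.Ioo (0:ℝ) a, ENNReal.ofReal (π w) * g (cint a w π)) =
        ∫⁻ w in Set.Ioo (0:ℝ) a, ENNReal.ofReal (π w) * g (θ + ∫ t in (0:ℝ)..w, π t) := by
      apply setLIntegral_congr_fun measurableSet_Ioo
      intro w hw
      have : cint a w π = θ + ∫ t in (0:ℝ)..w, π t := by
        unfold cint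
        rw [if_neg (not_le.2 hw.2)]
      simp only [this]
    rw [hcongr, setLIntegral_congr (Ioo_ae_eq_Ioc
      (μ := (volume : Measure ℝ)) (a := (0:ℝ)) (b := a)),
      aux_push π hmeas hnn hint 0 a ha.1 θ g hg]
    have : θ + ∫ t in (0:ℝ)..a, π t = 1 := by linarith
    rw [this]
  rw [hpiece1, hpiece2, add_comm,
    ← lintegral_union measurableSet_Ioc (Set.Ioc_disjoint_Ioc_of_le le_rfl),
    Set.Ioc_union_Ioc_eq_Ioc hθ0 hθ1]

lemma aux_summable_kr {r : ℝ} (h0 : 0 ≤ r) (h1 : r < 1) :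
    Summable (fun n : ℕ => (n : ℝ) * r ^ (n - 1)) := by
  have h2 : Summable (fun n : ℕ => (n : ℝ) * r ^ n) := by
    have := summable_pow_mul_geometric_of_norm_lt_one (R := ℝ) 1
      (r := r) (by rw [Real.norm_eq_abs, abs_of_nonneg h0]; exact h1)
    simpa using this
  have h3 : Summable (fun n : ℕ => r ^ n) := summable_geometric_of_lt_one h0 h1
  have h1' : Summable (fun n : ℕ => ((n : ℝ) + 1) * r ^ n) := by
    apply (h2.add h3).congr
    intro n
    ring
  apply (summable_nat_add_iff 1).1
  apply h1'.congr
  intro n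
  push_cast
  simp

lemma kt_hasDerivAt (p : ℕ → ℝ) (Kt : ℝ → ℝ)
    (hpnn : ∀ k, 0 ≤ p k) (hple : ∀ k, p k ≤ 1)
    (hKt : ∀ s : ℝ, Kt s = ∑' k : ℕ, p k * s ^ k)
    {s : ℝ} (hs : |s| < 1) :
    HasDerivAt Kt (∑' k : ℕ, p k * ((k : ℝ) * s ^ (k - 1))) s := by
  set r : ℝ := (|s| + 1) / 2 with hr
  have habs : 0 ≤ |s| := abs_nonneg s
  have hr1 : r < 1 := by rw [hr]; linarith
  have hr0 : 0 < r := by rw [hr]; linarith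
  have hsr : |s| < r := by rw [hr]; linarith
  have hu : Summable (fun n : ℕ => (n : ℝ) * r ^ (n - 1)) := aux_summable_kr hr0.le hr1
  rw [show Kt = (fun z : ℝ => ∑' k : ℕ, p k * z ^ k) from funext hKt]
  apply hasDerivAt_tsum_of_isPreconnected hu Metric.isOpen_ball
    (convex_ball (0:ℝ) r).isPreconnected
    (g := fun (n : ℕ) (z : ℝ) => p n * z ^ n)
    (g' := fun (n : ℕ) (z : ℝ) => p n * ((n : ℝ) * z ^ (n - 1)))
    (y₀ := 0) (y := s)
  · intro n y _
    exact (hasDerivAt_pow n y).const_mul (p n)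
  · intro n y hy
    rw [Metric.mem_ball, Real.dist_0_eq_abs] at hy
    rw [Real.norm_eq_abs, abs_mul, abs_mul, Nat.abs_cast, abs_pow]
    calc |p n| * ((n : ℝ) * |y| ^ (n - 1)) ≤ 1 * ((n : ℝ) * r ^ (n - 1)) := by
          apply mul_le_mul
          · rw [abs_of_nonneg (hpnn n)]; exact hple n
          · exact mul_le_mul_of_nonneg_left
              (pow_le_pow_left₀ (abs_nonneg y) hy.le _) (Nat.cast_nonneg n)
          · positivity
          · norm_num
      _ = (n : ℝ) * r ^ (n - 1) := one_mul _
  · exact Metric.mem_ball_self hr0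
  · apply summable_of_ne_finset_zero (s := {0})
    intro n hn
    simp only [Finset.mem_singleton] at hn
    rw [zero_pow hn, mul_zero]
  · rw [Metric.mem_ball, Real.dist_0_eq_abs]
    exact hsr

lemma kt_deriv_eq (p : ℕ → ℝ) (Kt : ℝ → ℝ)
    (hpnn : ∀ k, 0 ≤ p k) (hple : ∀ k, p k ≤ 1)
    (hKt : ∀ s : ℝ, Kt s = ∑' k : ℕ, p k * s ^ k)
    {s : ℝ} (hs : |s| < 1) :
    deriv Kt s = ∑' k : ℕ, p k * ((k : ℝ) * s ^ (k - 1)) :=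
  (kt_hasDerivAt p Kt hpnn hple hKt hs).deriv

lemma kt_qsummable (p : ℕ → ℝ) (hpnn : ∀ k, 0 ≤ p k) (hple : ∀ k, p k ≤ 1)
    {s : ℝ} (h0 : 0 ≤ s) (h1 : s < 1) :
    Summable (fun k : ℕ => p k * ((k : ℝ) * s ^ (k - 1))) := by
  apply Summable.of_nonneg_of_le
    (fun k => mul_nonneg (hpnn k) (mul_nonneg (Nat.cast_nonneg k) (pow_nonneg h0 _)))
    (fun k => mul_le_of_le_one_left (mul_nonneg (Nat.cast_nonneg k) (pow_nonneg h0 _)) (hple k))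
  exact aux_summable_kr h0 h1

lemma kt_lint (p : ℕ → ℝ) (hp0 : p 0 = 0) (hpnn : ∀ k, 0 ≤ p k) (hple : ∀ k, p k ≤ 1)
    (hpsum : HasSum p 1) (Kt : ℝ → ℝ)
    (hKt : ∀ s : ℝ, Kt s = ∑' k : ℕ, p k * s ^ k) :
    (∫⁻ t in Set.Ioc (0:ℝ) 1, ENNReal.ofReal |deriv Kt t|) ≤ 1 := by
  set q : ℝ → ℝ := fun s => ∑' k : ℕ, p k * ((k : ℝ) * s ^ (k - 1)) with hq
  have hqnn : ∀ s : ℝ, 0 ≤ s → 0 ≤ q s := fun s h0 =>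
    tsum_nonneg (fun k => mul_nonneg (hpnn k) (mul_nonneg (Nat.cast_nonneg k) (pow_nonneg h0 _)))
  have hqmono : ∀ s1 s2 : ℝ, 0 ≤ s1 → s1 ≤ s2 → s2 < 1 → q s1 ≤ q s2 := by
    intro s1 s2 h0 h12 h2
    apply Summable.tsum_le_tsum _ (kt_qsummable p hpnn hple h0 (lt_of_le_of_lt h12 h2))
      (kt_qsummable p hpnn hple (le_trans h0 h12) h2)
    intro k
    exact mul_le_mul_of_nonneg_left
      (mul_le_mul_of_nonneg_left (pow_le_pow_left₀ h0 h12 _) (Nat.cast_nonneg k)) (hpnn k)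
  have hKtle : ∀ r : ℝ, 0 ≤ r → r ≤ 1 → Kt r ≤ 1 := by
    intro r h0 h1
    rw [hKt]
    have hsum1 : Summable (fun k : ℕ => p k * r ^ k) :=
      Summable.of_nonneg_of_le (fun k => mul_nonneg (hpnn k) (pow_nonneg h0 _))
        (fun k => mul_le_of_le_one_right (hpnn k) (pow_le_one₀ h0 h1)) hpsum.summable
    calc (∑' k : ℕ, p k * r ^ k) ≤ ∑' k : ℕ, p k :=
          Summable.tsum_le_tsum (fun k => mul_le_of_le_one_right (hpnn k) (pow_le_one₀ h0 h1))
            hsum1 hpsum.summable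
      _ = 1 := hpsum.tsum_eq
  have hKt0 : Kt 0 = 0 := by
    rw [hKt, tsum_eq_single 0 (fun b hb => by rw [zero_pow hb, mul_zero])]
    simp [hp0]
  have hdmeas : Measurable (fun t => ENNReal.ofReal |deriv Kt t|) :=
    ((measurable_deriv Kt).abs).ennreal_ofReal
  -- bound on Ioc 0 r for r < 1
  have hIr : ∀ r : ℝ, 0 < r → r < 1 →
      (∫⁻ t in Set.Ioc (0:ℝ) r, ENNReal.ofReal |deriv Kt t|) ≤ 1 := by
    intro r hr0 hr1
    have habs1 : ∀ x : ℝ, x ∈ Set.Icc (0:ℝ) r → |x| < 1 := by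
      intro x hx
      rw [abs_of_nonneg hx.1]
      exact lt_of_le_of_lt hx.2 hr1
    have huIcc : Set.uIcc (0:ℝ) r = Set.Icc (0:ℝ) r := Set.uIcc_of_le hr0.le
    have hmono' : MonotoneOn (deriv Kt) (Set.uIcc (0:ℝ) r) := by
      rw [huIcc]
      intro x hx y hy hxy
      rw [kt_deriv_eq p Kt hpnn hple hKt (habs1 x hx),
        kt_deriv_eq p Kt hpnn hple hKt (habs1 y hy)]
      exact hqmono x y hx.1 hxy (lt_of_le_of_lt hy.2 hr1)
    have hII : IntervalIntegrable (deriv Kt) volume 0 r := hmono'.intervalIntegrable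
    have hftc : (∫ t in (0:ℝ)..r, deriv Kt t) = Kt r - Kt 0 := by
      apply intervalIntegral.integral_eq_sub_of_hasDerivAt _ hII
      intro x hx
      rw [huIcc] at hx
      rw [kt_deriv_eq p Kt hpnn hple hKt (habs1 x hx)]
      exact kt_hasDerivAt p Kt hpnn hple hKt (habs1 x hx)
    have hderivnn : ∀ t ∈ Set.Ioc (0:ℝ) r, 0 ≤ deriv Kt t := by
      intro t ht
      rw [kt_deriv_eq p Kt hpnn hple hKt (habs1 t ⟨ht.1.le, ht.2⟩)]
      exact hqnn t ht.1.le
    calc (∫⁻ t in Set.Ioc (0:ℝ) r, ENNReal.ofReal |deriv Kt t|)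
        = ∫⁻ t in Set.Ioc (0:ℝ) r, ENNReal.ofReal (deriv Kt t) := by
          apply setLIntegral_congr_fun measurableSet_Ioc
          intro t ht
          simp only [abs_of_nonneg (hderivnn t ht)]
      _ = ENNReal.ofReal (∫ t in Set.Ioc (0:ℝ) r, deriv Kt t) := by
          rw [ofReal_integral_eq_lintegral_ofReal hII.1
            ((ae_restrict_iff' measurableSet_Ioc).2 (Filter.Eventually.of_forall hderivnn))]
      _ ≤ 1 := by
          rw [← intervalIntegral.integral_of_le hr0.le, hftc, hKt0, sub_zero]
          rw [show (1 : ENNReal) = ENNReal.ofReal 1 by simp]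
          exact ENNReal.ofReal_le_ofReal (hKtle r hr0.le hr1.le)
  -- monotone limit
  set rn : ℕ → ℝ := fun n => 1 - 1 / (n + 2) with hrn
  have hdiv : ∀ x y : ℝ, 0 < x → x ≤ y → 1 / y ≤ 1 / x := fun x y hx hxy =>
    one_div_le_one_div_of_le hx hxy
  have hrn0 : ∀ n, 0 < rn n := by
    intro n
    rw [hrn]
    simp only
    have h2 : (1:ℝ) / ((n:ℝ) + 2) ≤ 1 / 2 :=
      hdiv 2 ((n:ℝ) + 2) two_pos (by linarith [Nat.cast_nonneg (α := ℝ) n])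
    linarith
  have hrn1 : ∀ n, rn n < 1 := by
    intro n
    rw [hrn]
    simp only
    have : (0:ℝ) < 1 / (n + 2) := by positivity
    linarith
  have hrnmono : ∀ n m : ℕ, n ≤ m → rn n ≤ rn m := by
    intro n m hnm
    rw [hrn]
    simp only
    have hcast : (n:ℝ) ≤ (m:ℝ) := Nat.cast_le.2 hnm
    have : (1:ℝ) / ((m:ℝ) + 2) ≤ 1 / ((n:ℝ) + 2) :=
      hdiv ((n:ℝ) + 2) ((m:ℝ) + 2) (by positivity) (by linarith)
    linarith
  set fE : ℝ → ENNReal := fun t => ENNReal.ofReal |deriv Kt t| with hfE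
  set F : ℕ → ℝ → ENNReal := fun n => (Set.Ioc (0:ℝ) (rn n)).indicator fE with hF
  have hFmeas : ∀ n, Measurable (F n) := fun n => hdmeas.indicator measurableSet_Ioc
  have hFmono : Monotone F := by
    intro n m hnm
    exact Set.indicator_le_indicator_of_subset
      (Set.Ioc_subset_Ioc le_rfl (hrnmono n m hnm)) (fun t => zero_le)
  have hsup : ∀ t, (⨆ n, F n t) = (Set.Ioo (0:ℝ) 1).indicator fE t := by
    intro t
    apply le_antisymm
    · apply iSup_le
      intro n
      exact Set.indicator_le_indicator_of_subset
        (show Set.Ioc (0:ℝ) (rn n) ⊆ Set.Ioo (0:ℝ) 1 from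
          fun t ht => ⟨ht.1, lt_of_le_of_lt ht.2 (hrn1 n)⟩) (fun t => zero_le) t
    · rcases Classical.em (t ∈ Set.Ioo (0:ℝ) 1) with ht | ht
      · obtain ⟨n, hn⟩ := exists_nat_one_div_lt (show (0:ℝ) < 1 - t by linarith [ht.2])
        have htn : t ≤ rn n := by
          rw [hrn]
          simp only
          have h2 : (1:ℝ) / ((n:ℝ) + 2) ≤ 1 / ((n:ℝ) + 1) :=
            hdiv ((n:ℝ) + 1) ((n:ℝ) + 2) (by positivity) (by linarith)
          push_cast at hn ⊢
          linarith
        have h1 : (Set.Ioo (0:ℝ) 1).indicator fE t = fE t := Set.indicator_of_mem ht _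
        have h2 : F n t = fE t :=
          Set.indicator_of_mem (show t ∈ Set.Ioc (0:ℝ) (rn n) from ⟨ht.1, htn⟩) _
        rw [h1, ← h2]
        exact le_iSup (fun n => F n t) n
      · rw [Set.indicator_of_notMem ht]
        exact zero_le
  calc (∫⁻ t in Set.Ioc (0:ℝ) 1, fE t)
      = ∫⁻ t in Set.Ioo (0:ℝ) 1, fE t := setLIntegral_congr (Ioo_ae_eq_Ioc
          (μ := (volume : Measure ℝ)) (a := (0:ℝ)) (b := (1:ℝ))).symm
    _ = ∫⁻ t, (Set.Ioo (0:ℝ) 1).indicator fE t := (lintegral_indicator measurableSet_Ioo _).symm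
    _ = ∫⁻ t, ⨆ n, F n t := by
        apply lintegral_congr
        intro t
        rw [hsup]
    _ = ⨆ n, ∫⁻ t, F n t := lintegral_iSup hFmeas hFmono
    _ ≤ 1 := by
        apply iSup_le
        intro n
        rw [hF]
        simp only
        rw [lintegral_indicator measurableSet_Ioc]
        exact hIr (rn n) (hrn0 n) (hrn1 n)

lemma sm_setIoc_integral (W : ℝ × ℝ → ℝ → ℝ)
    (hW : Measurable (fun q : (ℝ × ℝ) × ℝ => W q.1 q.2))
    (e1 e2 : ℝ × ℝ → ℝ) (he1 : Measurable e1) (he2 : Measurable e2) :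
    StronglyMeasurable (fun pq : ℝ × ℝ => ∫ y in Set.Ioc (e1 pq) (e2 pq), W pq y) := by
  have key : ∀ pq : ℝ × ℝ, (∫ y in Set.Ioc (e1 pq) (e2 pq), W pq y) =
      ∫ y, (Set.Ioc (e1 pq) (e2 pq)).indicator (W pq) y := fun pq =>
    (integral_indicator measurableSet_Ioc).symm
  simp_rw [key]
  have hmeas : Measurable (fun q : (ℝ × ℝ) × ℝ =>
      (Set.Ioc (e1 q.1) (e2 q.1)).indicator (W q.1) q.2) := by
    have heq : (fun q : (ℝ × ℝ) × ℝ => (Set.Ioc (e1 q.1) (e2 q.1)).indicator (W q.1) q.2)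
        = fun q : (ℝ × ℝ) × ℝ =>
          if q ∈ {q : (ℝ × ℝ) × ℝ | e1 q.1 < q.2 ∧ q.2 ≤ e2 q.1} then W q.1 q.2 else 0 := by
      funext q
      rw [Set.indicator_apply]
      rfl
    rw [heq]
    exact Measurable.ite
      ((measurableSet_lt (he1.comp measurable_fst) measurable_snd).inter
        (measurableSet_le measurable_snd (he2.comp measurable_fst)))
      hW measurable_const
  exact hmeas.stronglyMeasurable.integral_prod_right'

lemma sm_intervalIntegral (W : ℝ × ℝ → ℝ → ℝ)
    (hW : Measurable (fun q : (ℝ × ℝ) × ℝ => W q.1 q.2))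
    (e1 e2 : ℝ × ℝ → ℝ) (he1 : Measurable e1) (he2 : Measurable e2) :
    StronglyMeasurable (fun pq : ℝ × ℝ => ∫ y in (e1 pq)..(e2 pq), W pq y) := by
  have key : ∀ pq : ℝ × ℝ, (∫ y in (e1 pq)..(e2 pq), W pq y) =
      (∫ y in Set.Ioc (e1 pq) (e2 pq), W pq y) -
        ∫ y in Set.Ioc (e2 pq) (e1 pq), W pq y := fun pq => rfl
  simp_rw [key]
  exact (sm_setIoc_integral W hW e1 e2 he1 he2).sub (sm_setIoc_integral W hW e2 e1 he2 he1)

/-- Propagation of the approximation error of `f_K` into the mean batch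
sojourn time: if `|f̂ − f| ≤ ζ·π(x)π(y)/(ρπ(y)+1−ρ)`, then the functional `I`
(the `f_K`-dependent term of `E[S^B]`) satisfies
`|I(f̂) − I(f)| ≤ (mζ/ρ)(e^ρ − 1)`. -/
theorem batch_sojourn_error_propagation
    (ρ : ℝ) (hρ : ρ ∈ Set.Ioo (0 : ℝ) 1)
    (π : ℝ → ℝ) (hπmeas : Measurable π)
    (hπnn : ∀ x ∈ Set.Icc (0 : ℝ) 1, 0 ≤ π x)
    (hπbd : ∃ M : ℝ, ∀ x ∈ Set.Icc (0 : ℝ) 1, π x ≤ M)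
    (hπ1 : (∫ u in (0 : ℝ)..1, π u) = 1)
    (p : ℕ → ℝ) (hp0 : p 0 = 0)
    (hpnn : ∀ k, 0 ≤ p k) (hple : ∀ k, p k ≤ 1)
    (hpsum : HasSum p 1)
    (Kt : ℝ → ℝ) (hKt : ∀ s : ℝ, Kt s = ∑' k : ℕ, p k * s ^ k)
    (m ζ : ℝ) (hm : 0 < m) (hζ : 0 < ζ)
    (f fhat : ℝ → ℝ → ℝ)
    (hfmeas : Measurable (Function.uncurry f))
    (hfhatmeas : Measurable (Function.uncurry fhat))
    (hclose : ∀ x ∈ Set.Icc (0 : ℝ) 1, ∀ y ∈ Set.Icc (0 : ℝ) 1,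
      |fhat x y - f x y| ≤ ζ * π x * π y / (ρ * π y + (1 - ρ)))
    (I : (ℝ → ℝ → ℝ) → ℝ)
    (hI : ∀ h : ℝ → ℝ → ℝ,
      I h = ∫ u in (0 : ℝ)..1, (ρ * π u + (1 - ρ)) *
        ∫ x in (0 : ℝ)..1, π x * deriv Kt (cint u x π) *
          cint u x (fun y => h y u * m * Real.exp (ρ * cint y x π))) :
    |I fhat - I f| ≤ m * ζ / ρ * (Real.exp ρ - 1) := by

  obtain ⟨hρ0, hρ1⟩ := hρ
  obtain ⟨M, hM⟩ := hπbd
  set M' : ℝ := max M 0 with hM'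
  set πI : ℝ → ℝ := (Set.Icc (0:ℝ) 1).indicator π with hπIdef
  have hπIeq : ∀ w ∈ Set.Icc (0:ℝ) 1, πI w = π w := fun w hw => Set.indicator_of_mem hw π
  have hπInn : ∀ w, 0 ≤ πI w := by
    intro w
    rw [hπIdef, Set.indicator_apply]
    split_ifs with h
    · exact hπnn w h
    · exact le_rfl
  have hπIbd : ∀ w, πI w ≤ M' := by
    intro w
    rw [hπIdef, Set.indicator_apply]
    split_ifs with h
    · exact le_trans (hM w h) (le_max_left _ _)
    · exact le_max_right _ _
  have hπImeas : Measurable πI := hπmeas.indicator measurableSet_Icc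
  have hπIint : Integrable πI := by
    have h1 : IntegrableOn π (Set.Icc (0:ℝ) 1) := by
      apply Integrable.mono' (g := fun _ => M')
        (integrableOn_const measure_Icc_lt_top.ne)
        hπmeas.aestronglyMeasurable
      rw [ae_restrict_iff' measurableSet_Icc]
      apply Filter.Eventually.of_forall
      intro w hw
      rw [Real.norm_eq_abs, abs_of_nonneg (hπnn w hw)]
      exact le_trans (hM w hw) (le_max_left _ _)
    exact h1.integrable_indicator measurableSet_Icc
  have hπI1 : (∫ t in (0:ℝ)..1, πI t) = 1 := by
    have heqint : (∫ t in (0:ℝ)..1, πI t) = ∫ t in (0:ℝ)..1, π t := by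
      apply intervalIntegral.integral_congr
      intro w hw
      apply hπIeq
      rwa [Set.uIcc_of_le (by norm_num : (0:ℝ) ≤ 1)] at hw
    rw [heqint, hπ1]
  have hπeqI : Set.EqOn π πI (Set.Icc (0:ℝ) 1) := fun w hw => (hπIeq w hw).symm
  set E1 : ℝ := (Real.exp ρ - 1) / ρ with hE1def
  have hexp1 : 1 ≤ Real.exp ρ := by nlinarith [Real.add_one_le_exp ρ]
  have hE1nn : 0 ≤ E1 := div_nonneg (by linarith) hρ0.le
  -- local functionals
  set Ch : (ℝ → ℝ → ℝ) → ℝ → ℝ → ℝ :=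
    fun h u x => cint u x (fun y => h y u * m * Real.exp (ρ * cint y x πI)) with hChdef
  set Bf : (ℝ → ℝ → ℝ) → ℝ → ℝ → ℝ :=
    fun h u x => πI x * deriv Kt (cint u x πI) * Ch h u x with hBfdef
  set Af : (ℝ → ℝ → ℝ) → ℝ → ℝ :=
    fun h u => (ρ * πI u + (1 - ρ)) * ∫ x in (0:ℝ)..1, Bf h u x with hAfdef
  have hIA : ∀ h : ℝ → ℝ → ℝ, I h = ∫ u in (0:ℝ)..1, Af h u := by
    intro h
    rw [hI h]
    apply intervalIntegral.integral_congr
    intro u hu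
    have hu' : u ∈ Set.Icc (0:ℝ) 1 := by
      rwa [Set.uIcc_of_le (by norm_num : (0:ℝ) ≤ 1)] at hu
    rw [hAfdef]
    simp only
    congr 1
    · rw [hπIeq u hu']
    · apply intervalIntegral.integral_congr
      intro x hx
      have hx' : x ∈ Set.Icc (0:ℝ) 1 := by
        rwa [Set.uIcc_of_le (by norm_num : (0:ℝ) ≤ 1)] at hx
      have h1 : π x = πI x := (hπIeq x hx').symm
      have h2 : cint u x π = cint u x πI := cint_congr hπeqI hu' hx'
      have h3 : cint u x (fun y => h y u * m * Real.exp (ρ * cint y x π)) = Ch h u x := by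
        rw [hChdef]
        simp only
        apply cint_congr _ hu' hx'
        intro y hy
        show h y u * m * Real.exp (ρ * cint y x π) =
          h y u * m * Real.exp (ρ * cint y x πI)
        rw [cint_congr hπeqI hy hx']
      show π x * deriv Kt (cint u x π) *
          cint u x (fun y => h y u * m * Real.exp (ρ * cint y x π)) =
        Bf h u x
      rw [h1, h2, h3, hBfdef]
  have hcmeas : Measurable (fun q : ℝ × ℝ => cint q.1 q.2 πI) := cint_meas πI hπIint
  have hden : ∀ u : ℝ, 0 < ρ * πI u + (1 - ρ) := by
    intro u
    nlinarith [hπInn u]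
  -- exp-substitution bound
  have hRx : ∀ x ∈ Set.Icc (0:ℝ) 1,
      (∫ y in Set.Ioc (0:ℝ) 1, πI y * Real.exp (ρ * (1 - cint x y πI))) ≤ E1 := by
    intro x hx
    have hcontexp : Continuous (fun t : ℝ => Real.exp (ρ * (1 - t))) := by
      fun_prop
    have hg0meas : Measurable (fun t : ℝ => ENNReal.ofReal (Real.exp (ρ * (1 - t)))) :=
      hcontexp.measurable.ennreal_ofReal
    have hintegrand_meas : Measurable (fun y => πI y * Real.exp (ρ * (1 - cint x y πI))) := by
      apply hπImeas.mul
      exact Real.measurable_exp.comp (measurable_const.mul (measurable_const.sub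
        (hcmeas.comp (measurable_const.prodMk measurable_id))))
    have hintegrand_nn : ∀ y, 0 ≤ πI y * Real.exp (ρ * (1 - cint x y πI)) :=
      fun y => mul_nonneg (hπInn y) (Real.exp_nonneg _)
    have hintegrand_bd : ∀ y ∈ Set.Icc (0:ℝ) 1,
        πI y * Real.exp (ρ * (1 - cint x y πI)) ≤ M' * Real.exp ρ := by
      intro y hy
      apply mul_le_mul (hπIbd y) _ (Real.exp_nonneg _) (le_trans (hπInn 0) (hπIbd 0))
      rw [Real.exp_le_exp]
      nlinarith [(cint_mem πI hπInn hπIint hπI1 hx hy).1]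
    have hintegrand_int : IntegrableOn
        (fun y => πI y * Real.exp (ρ * (1 - cint x y πI))) (Set.Ioc (0:ℝ) 1) := by
      apply Integrable.mono' (g := fun _ => M' * Real.exp ρ)
        (integrableOn_const measure_Ioc_lt_top.ne)
        hintegrand_meas.aestronglyMeasurable
      rw [ae_restrict_iff' measurableSet_Ioc]
      apply Filter.Eventually.of_forall
      intro y hy
      rw [Real.norm_eq_abs, abs_of_nonneg (hintegrand_nn y)]
      exact hintegrand_bd y ⟨hy.1.le, hy.2⟩
    have hlift : ENNReal.ofReal (∫ y in Set.Ioc (0:ℝ) 1,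
        πI y * Real.exp (ρ * (1 - cint x y πI))) =
        ∫⁻ y in Set.Ioc (0:ℝ) 1, ENNReal.ofReal (πI y * Real.exp (ρ * (1 - cint x y πI))) :=
      ofReal_integral_eq_lintegral_ofReal hintegrand_int
        (Filter.Eventually.of_forall hintegrand_nn)
    have hsplit : (∫⁻ y in Set.Ioc (0:ℝ) 1,
        ENNReal.ofReal (πI y * Real.exp (ρ * (1 - cint x y πI)))) =
        ∫⁻ y in Set.Ioc (0:ℝ) 1, ENNReal.ofReal (πI y) *
          (fun t : ℝ => ENNReal.ofReal (Real.exp (ρ * (1 - t)))) (cint x y πI) := by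
      apply lintegral_congr
      intro y
      rw [ENNReal.ofReal_mul (hπInn y)]
    have hsub := aux_sub πI hπImeas hπInn hπIint hπI1 hx
      (fun t : ℝ => ENNReal.ofReal (Real.exp (ρ * (1 - t)))) hg0meas
    have hval : (∫ t in (0:ℝ)..1, Real.exp (ρ * (1 - t))) = E1 := by
      have hd : ∀ t ∈ Set.uIcc (0:ℝ) 1, HasDerivAt
          (fun t => -(1/ρ) * Real.exp (ρ * (1 - t))) (Real.exp (ρ * (1 - t))) t := by
        intro t _
        have h1 : HasDerivAt (fun y : ℝ => ρ * (1 - y)) (ρ * (-1)) t :=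
          ((hasDerivAt_id t).const_sub 1).const_mul ρ
        have h2 := (h1.exp).const_mul (-(1/ρ))
        refine h2.congr_deriv ?_
        rw [show -(1/ρ) * (Real.exp (ρ * (1 - t)) * (ρ * -1)) = Real.exp (ρ * (1 - t)) * (ρ / ρ) by ring,
          div_self hρ0.ne', mul_one]
      rw [intervalIntegral.integral_eq_sub_of_hasDerivAt hd
        (hcontexp.intervalIntegrable 0 1)]
      rw [hE1def]
      simp only [sub_self, mul_zero, Real.exp_zero, sub_zero, mul_one]
      field_simp
      ring
    have hrhs : (∫⁻ t in Set.Ioc (0:ℝ) 1, ENNReal.ofReal (Real.exp (ρ * (1 - t)))) =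
        ENNReal.ofReal E1 := by
      rw [← ofReal_integral_eq_lintegral_ofReal (hcontexp.integrableOn_Ioc)
        (Filter.Eventually.of_forall (fun t => Real.exp_nonneg _))]
      rw [← intervalIntegral.integral_of_le zero_le_one, hval]
    have hfinal : ENNReal.ofReal (∫ y in Set.Ioc (0:ℝ) 1,
        πI y * Real.exp (ρ * (1 - cint x y πI))) ≤ ENNReal.ofReal E1 := by
      rw [hlift, hsplit, ← hrhs]
      exact hsub
    exact (ENNReal.ofReal_le_ofReal_iff hE1nn).1 hfinal
  -- Step C : inner cint difference bound
  have hCdiff : ∀ u ∈ Set.Icc (0:ℝ) 1, ∀ x ∈ Set.Icc (0:ℝ) 1,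
      |Ch fhat u x - Ch f u x| ≤
        (ζ * πI u / (ρ * πI u + (1 - ρ))) * (m * E1) := by
    intro u hu x hx
    set κ : ℝ := ζ * πI u / (ρ * πI u + (1 - ρ)) with hκ
    have hκ0 : 0 ≤ κ := div_nonneg (mul_nonneg hζ.le (hπInn u)) (hden u).le
    set ψ : ℝ → ℝ := fun y => (fhat y u - f y u) * m * Real.exp (ρ * cint y x πI) with hψ
    set η : (ℝ → ℝ → ℝ) → ℝ → ℝ :=
      fun h y => h y u * m * Real.exp (ρ * cint y x πI) with hη
    have hsec : ∀ h : ℝ → ℝ → ℝ, Measurable (Function.uncurry h) → Measurable (η h) := by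
      intro h hh
      apply Measurable.mul
      · exact (hh.comp (measurable_id.prodMk measurable_const)).mul measurable_const
      · exact Real.measurable_exp.comp (measurable_const.mul
          (hcmeas.comp (measurable_id.prodMk measurable_const)))
    have hψeq : ψ = fun y => η fhat y - η f y := by
      funext y
      rw [hψ, hη]
      simp only
      ring
    have hψmeas : Measurable ψ := by
      rw [hψeq]
      exact (hsec fhat hfhatmeas).sub (hsec f hfmeas)
    have hψbd : ∀ y ∈ Set.Icc (0:ℝ) 1,
        |ψ y| ≤ ζ * M' * M' / (1 - ρ) * m * Real.exp ρ := by
      intro y hy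
      have hcl := hclose y hy u hu
      rw [← hπIeq y hy, ← hπIeq u hu] at hcl
      have hM'0 : 0 ≤ M' := le_max_right _ _
      have hd1 : ζ * πI y * πI u / (ρ * πI u + (1 - ρ)) ≤ ζ * M' * M' / (1 - ρ) := by
        apply div_le_div₀
          (mul_nonneg (mul_nonneg hζ.le hM'0) hM'0)
          (mul_le_mul (mul_le_mul_of_nonneg_left (hπIbd y) hζ.le) (hπIbd u)
            (hπInn u) (mul_nonneg hζ.le hM'0))
          (by linarith)
          (by nlinarith [hπInn u])
      have hexple : Real.exp (ρ * cint y x πI) ≤ Real.exp ρ := by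
        rw [Real.exp_le_exp]
        have := (cint_mem πI hπInn hπIint hπI1 hy hx).2
        nlinarith
      calc |ψ y| = |fhat y u - f y u| * m * Real.exp (ρ * cint y x πI) := by
            rw [hψ]
            simp only
            rw [abs_mul, abs_mul, abs_of_nonneg hm.le,
              abs_of_nonneg (Real.exp_nonneg _)]
        _ ≤ (ζ * M' * M' / (1 - ρ)) * m * Real.exp ρ := by
            apply mul_le_mul _ hexple (Real.exp_nonneg _)
              (mul_nonneg (div_nonneg (mul_nonneg (mul_nonneg hζ.le hM'0) hM'0)
                (by linarith)) hm.le)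
            exact mul_le_mul_of_nonneg_right (le_trans hcl hd1) hm.le
    have hψint : IntegrableOn ψ (Set.Icc (0:ℝ) 1) := by
      apply Integrable.mono' (g := fun _ => ζ * M' * M' / (1 - ρ) * m * Real.exp ρ)
        (integrableOn_const measure_Icc_lt_top.ne)
        hψmeas.aestronglyMeasurable
      rw [ae_restrict_iff' measurableSet_Icc]
      apply Filter.Eventually.of_forall
      intro y hy
      rw [Real.norm_eq_abs]
      exact hψbd y hy
    have hψII : ∀ a b : ℝ, a ∈ Set.Icc (0:ℝ) 1 → b ∈ Set.Icc (0:ℝ) 1 →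
        IntervalIntegrable ψ volume a b := by
      intro a b ha hb
      rw [intervalIntegrable_iff]
      apply hψint.mono_set
      intro y hy
      exact ⟨le_of_lt (lt_of_le_of_lt (le_min ha.1 hb.1) hy.1),
        le_trans hy.2 (max_le ha.2 hb.2)⟩
    have habs_int : IntegrableOn (fun y => |ψ y|) (Set.Ioc (0:ℝ) 1) :=
      (hψint.mono_set Set.Ioc_subset_Icc_self).abs
    have hmono01 : ∀ s : Set ℝ, s ⊆ Set.Ioc (0:ℝ) 1 →
        (∫ y in s, |ψ y|) ≤ ∫ y in Set.Ioc (0:ℝ) 1, |ψ y| := by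
      intro s hsub
      apply setIntegral_mono_set habs_int
        (Filter.Eventually.of_forall (fun y => abs_nonneg _)) hsub.eventuallyLE
    have hpiece : ∀ a b : ℝ, a ∈ Set.Icc (0:ℝ) 1 → b ∈ Set.Icc (0:ℝ) 1 → a ≤ b →
        |(∫ y in a..b, η fhat y) - ∫ y in a..b, η f y| ≤ ∫ y in Set.Ioc a b, |ψ y| := by
      intro a b ha hb hab
      have hηadd : η fhat = fun y => η f y + ψ y := by
        funext y
        rw [hψeq]
        ring
      rcases Classical.em (IntervalIntegrable (η f) volume a b) with hi | hi
      · have hdiffeq : (∫ y in a..b, η fhat y) - ∫ y in a..b, η f y = ∫ y in a..b, ψ y := by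
          rw [hηadd, intervalIntegral.integral_add hi (hψII a b ha hb)]
          ring
        rw [hdiffeq]
        calc |∫ y in a..b, ψ y| ≤ ∫ y in a..b, |ψ y| :=
              intervalIntegral.abs_integral_le_integral_abs hab
          _ = ∫ y in Set.Ioc a b, |ψ y| := intervalIntegral.integral_of_le hab
      · have hifhat : ¬ IntervalIntegrable (η fhat) volume a b := by
          intro hcon
          apply hi
          have heq2 : η f = fun y => η fhat y - ψ y := by
            funext y
            rw [hηadd]
            simp only
            ring
          rw [heq2]
          exact hcon.sub (hψII a b ha hb)
        rw [intervalIntegral.integral_undef hi, intervalIntegral.integral_undef hifhat,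
          sub_self, abs_zero]
        exact setIntegral_nonneg measurableSet_Ioc (fun y _ => abs_nonneg _)
    have hChdiff_le : |Ch fhat u x - Ch f u x| ≤ ∫ y in Set.Ioc (0:ℝ) 1, |ψ y| := by
      have hChfh : Ch fhat u x = cint u x (η fhat) := by rw [hChdef]
      have hChf : Ch f u x = cint u x (η f) := by rw [hChdef]
      rw [hChfh, hChf]
      unfold cint
      rcases le_or_gt u x with hc | hc
      · rw [if_pos hc, if_pos hc]
        exact le_trans (hpiece u x hu hx hc)
          (hmono01 _ (Set.Ioc_subset_Ioc hu.1 hx.2))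
      · rw [if_neg (not_le.2 hc), if_neg (not_le.2 hc)]
        have hd1 := hpiece u 1 hu (by norm_num) hu.2
        have hd2 := hpiece 0 x (by norm_num) hx hx.1
        have hdisj : Disjoint (Set.Ioc u 1) (Set.Ioc (0:ℝ) x) := by
          rw [Set.disjoint_left]
          intro y h1 h2
          have := h1.1
          have := h2.2
          linarith
        have hunion : (∫ y in Set.Ioc u 1 ∪ Set.Ioc (0:ℝ) x, |ψ y|) =
            (∫ y in Set.Ioc u 1, |ψ y|) + ∫ y in Set.Ioc (0:ℝ) x, |ψ y| :=
          setIntegral_union hdisj measurableSet_Ioc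
            (habs_int.mono_set (Set.Ioc_subset_Ioc hu.1 le_rfl))
            (habs_int.mono_set (Set.Ioc_subset_Ioc le_rfl hx.2))
        calc |((∫ y in u..1, η fhat y) + ∫ y in (0:ℝ)..x, η fhat y) -
              ((∫ y in u..1, η f y) + ∫ y in (0:ℝ)..x, η f y)|
            ≤ |(∫ y in u..1, η fhat y) - ∫ y in u..1, η f y| +
              |(∫ y in (0:ℝ)..x, η fhat y) - ∫ y in (0:ℝ)..x, η f y| := by
              have := abs_add_le ((∫ y in u..1, η fhat y) - ∫ y in u..1, η f y)
                ((∫ y in (0:ℝ)..x, η fhat y) - ∫ y in (0:ℝ)..x, η f y)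
              calc |((∫ y in u..1, η fhat y) + ∫ y in (0:ℝ)..x, η fhat y) -
                  ((∫ y in u..1, η f y) + ∫ y in (0:ℝ)..x, η f y)| =
                  |((∫ y in u..1, η fhat y) - ∫ y in u..1, η f y) +
                  ((∫ y in (0:ℝ)..x, η fhat y) - ∫ y in (0:ℝ)..x, η f y)| := by
                    congr 1
                    ring
                _ ≤ _ := this
          _ ≤ (∫ y in Set.Ioc u 1, |ψ y|) + ∫ y in Set.Ioc (0:ℝ) x, |ψ y| :=
              add_le_add hd1 hd2
          _ = ∫ y in Set.Ioc u 1 ∪ Set.Ioc (0:ℝ) x, |ψ y| := hunion.symm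
          _ ≤ ∫ y in Set.Ioc (0:ℝ) 1, |ψ y| := by
              apply hmono01
              intro y hy
              rcases hy with hy | hy
              · exact ⟨lt_of_le_of_lt hu.1 hy.1, hy.2⟩
              · exact ⟨hy.1, le_trans hy.2 hx.2⟩
    -- bound ∫ |ψ| by κ m E1
    have hae : ∀ᵐ y ∂(volume.restrict (Set.Ioc (0:ℝ) 1)),
        |ψ y| ≤ κ * m * (πI y * Real.exp (ρ * (1 - cint x y πI))) := by
      have hne : ∀ᵐ y : ℝ, y ≠ x := by
        rw [ae_iff]
        have hset : {y : ℝ | ¬ y ≠ x} = {x} := by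
          ext y
          simp
        rw [hset]
        exact Real.volume_singleton
      filter_upwards [ae_restrict_of_ae hne, ae_restrict_mem measurableSet_Ioc]
        with y hyne hymem
      have hy' : y ∈ Set.Icc (0:ℝ) 1 := ⟨hymem.1.le, hymem.2⟩
      have hflip : cint y x πI = 1 - cint x y πI := by
        have := cint_circle πI hπIint hπI1 hy' hx hyne
        linarith
      have hcl := hclose y hy' u hu
      rw [← hπIeq y hy', ← hπIeq u hu] at hcl
      have hfac : ζ * πI y * πI u / (ρ * πI u + (1 - ρ)) = κ * πI y := by
        rw [hκ]
        ring
      calc |ψ y| = |fhat y u - f y u| * m * Real.exp (ρ * cint y x πI) := by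
            rw [hψ]
            simp only
            rw [abs_mul, abs_mul, abs_of_nonneg hm.le,
              abs_of_nonneg (Real.exp_nonneg _)]
        _ ≤ (ζ * πI y * πI u / (ρ * πI u + (1 - ρ))) * m *
              Real.exp (ρ * cint y x πI) := by
            exact mul_le_mul_of_nonneg_right
              (mul_le_mul_of_nonneg_right hcl hm.le) (Real.exp_nonneg _)
        _ = κ * m * (πI y * Real.exp (ρ * (1 - cint x y πI))) := by
            rw [hfac, hflip]
            ring
    have hbound_meas : Measurable
        (fun y => κ * m * (πI y * Real.exp (ρ * (1 - cint x y πI)))) := by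
      apply Measurable.const_mul
      apply hπImeas.mul
      exact Real.measurable_exp.comp (measurable_const.mul (measurable_const.sub
        (hcmeas.comp (measurable_const.prodMk measurable_id))))
    have hbound_int : IntegrableOn
        (fun y => κ * m * (πI y * Real.exp (ρ * (1 - cint x y πI))))
        (Set.Ioc (0:ℝ) 1) := by
      apply Integrable.mono' (g := fun _ => κ * m * (M' * Real.exp ρ))
        (integrableOn_const measure_Ioc_lt_top.ne)
        hbound_meas.aestronglyMeasurable
      rw [ae_restrict_iff' measurableSet_Ioc]
      apply Filter.Eventually.of_forall
      intro y hy
      have hM'0 : 0 ≤ M' := le_max_right _ _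
      have h1 : πI y * Real.exp (ρ * (1 - cint x y πI)) ≤ M' * Real.exp ρ := by
        apply mul_le_mul (hπIbd y) _ (Real.exp_nonneg _) hM'0
        rw [Real.exp_le_exp]
        nlinarith [(cint_mem πI hπInn hπIint hπI1 hx ⟨hy.1.le, hy.2⟩).1]
      rw [Real.norm_eq_abs, abs_of_nonneg (mul_nonneg (mul_nonneg hκ0 hm.le)
        (mul_nonneg (hπInn y) (Real.exp_nonneg _)))]
      exact mul_le_mul_of_nonneg_left h1 (mul_nonneg hκ0 hm.le)
    calc |Ch fhat u x - Ch f u x| ≤ ∫ y in Set.Ioc (0:ℝ) 1, |ψ y| := hChdiff_le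
      _ ≤ ∫ y in Set.Ioc (0:ℝ) 1,
            κ * m * (πI y * Real.exp (ρ * (1 - cint x y πI))) :=
          integral_mono_ae habs_int hbound_int hae
      _ = κ * m * ∫ y in Set.Ioc (0:ℝ) 1,
            πI y * Real.exp (ρ * (1 - cint x y πI)) := integral_const_mul _ _
      _ ≤ κ * m * E1 := mul_le_mul_of_nonneg_left (hRx x hx) (mul_nonneg hκ0 hm.le)
      _ = κ * (m * E1) := by ring
  -- joint measurability of Bf
  have hBmeas : ∀ h : ℝ → ℝ → ℝ, Measurable (Function.uncurry h) →
      Measurable (fun q : ℝ × ℝ => Bf h q.1 q.2) := by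
    intro h hh
    have hW : Measurable (fun q : (ℝ × ℝ) × ℝ =>
        h q.2 q.1.1 * m * Real.exp (ρ * cint q.2 q.1.2 πI)) := by
      apply Measurable.mul
      · exact (hh.comp (measurable_snd.prodMk
          (measurable_fst.comp measurable_fst))).mul measurable_const
      · exact Real.measurable_exp.comp (measurable_const.mul
          (hcmeas.comp (measurable_snd.prodMk
            (measurable_snd.comp measurable_fst))))
    have h1 := sm_intervalIntegral
      (fun q y => h y q.1 * m * Real.exp (ρ * cint y q.2 πI)) hW
      Prod.fst Prod.snd measurable_fst measurable_snd
    have h2 := sm_intervalIntegral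
      (fun q y => h y q.1 * m * Real.exp (ρ * cint y q.2 πI)) hW
      Prod.fst (fun _ => (1:ℝ)) measurable_fst measurable_const
    have h3 := sm_intervalIntegral
      (fun q y => h y q.1 * m * Real.exp (ρ * cint y q.2 πI)) hW
      (fun _ => (0:ℝ)) Prod.snd measurable_const measurable_snd
    have hChm : Measurable (fun q : ℝ × ℝ => Ch h q.1 q.2) := by
      have heq : (fun q : ℝ × ℝ => Ch h q.1 q.2) = fun q : ℝ × ℝ =>
          if q.1 ≤ q.2 then
            ∫ y in q.1..q.2, h y q.1 * m * Real.exp (ρ * cint y q.2 πI)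
          else (∫ y in q.1..(1:ℝ), h y q.1 * m * Real.exp (ρ * cint y q.2 πI)) +
            ∫ y in (0:ℝ)..q.2, h y q.1 * m * Real.exp (ρ * cint y q.2 πI) := by
        funext q
        rw [hChdef]
        rfl
      rw [heq]
      exact Measurable.ite (measurableSet_le measurable_fst measurable_snd)
        h1.measurable (h2.measurable.add h3.measurable)
    rw [hBfdef]
    exact ((hπImeas.comp measurable_snd).mul
      ((measurable_deriv Kt).comp hcmeas)).mul hChm
  -- Step B : x-integral difference bound for fixed u
  have hXdiff : ∀ u ∈ Set.Ioc (0:ℝ) 1,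
      |(∫ x in (0:ℝ)..1, Bf fhat u x) - ∫ x in (0:ℝ)..1, Bf f u x| ≤
        (ζ * πI u / (ρ * πI u + (1 - ρ))) * (m * E1) := by
    intro u hu
    have hu' : u ∈ Set.Icc (0:ℝ) 1 := ⟨hu.1.le, hu.2⟩
    set κ : ℝ := ζ * πI u / (ρ * πI u + (1 - ρ)) with hκ
    have hκ0 : 0 ≤ κ := div_nonneg (mul_nonneg hζ.le (hπInn u)) (hden u).le
    set β : ℝ := κ * (m * E1) with hβ
    have hβ0 : 0 ≤ β := mul_nonneg hκ0 (mul_nonneg hm.le hE1nn)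
    set γ : ℝ → ℝ := fun x => πI x * |deriv Kt (cint u x πI)| with hγ
    have hγmeas : Measurable γ := hπImeas.mul
      (((measurable_deriv Kt).comp
        (hcmeas.comp (measurable_const.prodMk measurable_id))).abs)
    have hγnn : ∀ x, 0 ≤ γ x := fun x => mul_nonneg (hπInn x) (abs_nonneg _)
    have hγlint : (∫⁻ x in Set.Ioc (0:ℝ) 1, ENNReal.ofReal (γ x)) ≤ 1 := by
      have hcongr : ∀ x : ℝ, ENNReal.ofReal (γ x) =
          ENNReal.ofReal (πI x) *
            (fun t => ENNReal.ofReal |deriv Kt t|) (cint u x πI) := by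
        intro x
        rw [hγ]
        exact ENNReal.ofReal_mul (hπInn x)
      calc (∫⁻ x in Set.Ioc (0:ℝ) 1, ENNReal.ofReal (γ x))
          = ∫⁻ x in Set.Ioc (0:ℝ) 1, ENNReal.ofReal (πI x) *
              (fun t => ENNReal.ofReal |deriv Kt t|) (cint u x πI) :=
            lintegral_congr hcongr
        _ ≤ ∫⁻ t in Set.Ioc (0:ℝ) 1, ENNReal.ofReal |deriv Kt t| :=
            aux_sub πI hπImeas hπInn hπIint hπI1 hu' _
              ((measurable_deriv Kt).abs.ennreal_ofReal)
        _ ≤ 1 := kt_lint p hp0 hpnn hple hpsum Kt hKt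
    have hγint : IntegrableOn γ (Set.Ioc (0:ℝ) 1) := by
      constructor
      · exact hγmeas.aestronglyMeasurable
      · rw [hasFiniteIntegral_iff_ofReal (Filter.Eventually.of_forall hγnn)]
        exact lt_of_le_of_lt hγlint ENNReal.one_lt_top
    have hγle1 : (∫ x in Set.Ioc (0:ℝ) 1, γ x) ≤ 1 := by
      rw [integral_eq_lintegral_of_nonneg_ae (Filter.Eventually.of_forall hγnn)
        hγmeas.aestronglyMeasurable.restrict]
      calc (∫⁻ x in Set.Ioc (0:ℝ) 1, ENNReal.ofReal (γ x)).toReal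
          ≤ (1 : ENNReal).toReal := ENNReal.toReal_mono (by norm_num) hγlint
        _ = 1 := by simp
    have hBdiff_bd : ∀ x ∈ Set.Icc (0:ℝ) 1, |Bf fhat u x - Bf f u x| ≤ γ x * β := by
      intro x hx
      have heq : Bf fhat u x - Bf f u x =
          πI x * deriv Kt (cint u x πI) * (Ch fhat u x - Ch f u x) := by
        rw [hBfdef]
        ring
      rw [heq, abs_mul, abs_mul, abs_of_nonneg (hπInn x)]
      calc πI x * |deriv Kt (cint u x πI)| * |Ch fhat u x - Ch f u x|
          ≤ πI x * |deriv Kt (cint u x πI)| * β := by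
            apply mul_le_mul_of_nonneg_left _
              (mul_nonneg (hπInn x) (abs_nonneg _))
            rw [hβ, hκ]
            exact hCdiff u hu' x hx
        _ = γ x * β := by rw [hγ]
    have hBsecmeas : ∀ h : ℝ → ℝ → ℝ, Measurable (Function.uncurry h) →
        Measurable (fun x => Bf h u x) := fun h hh =>
      (hBmeas h hh).comp (measurable_const.prodMk measurable_id)
    have hBdiff_meas : Measurable (fun x => Bf fhat u x - Bf f u x) :=
      (hBsecmeas fhat hfhatmeas).sub (hBsecmeas f hfmeas)
    have hBdiff_int : IntegrableOn (fun x => Bf fhat u x - Bf f u x)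
        (Set.Ioc (0:ℝ) 1) := by
      apply Integrable.mono' (g := fun x => γ x * β) (hγint.mul_const β)
        hBdiff_meas.aestronglyMeasurable
      rw [ae_restrict_iff' measurableSet_Ioc]
      apply Filter.Eventually.of_forall
      intro x hx
      rw [Real.norm_eq_abs]
      exact hBdiff_bd x ⟨hx.1.le, hx.2⟩
    rw [intervalIntegral.integral_of_le zero_le_one,
      intervalIntegral.integral_of_le zero_le_one]
    rcases Classical.em (IntegrableOn (fun x => Bf f u x) (Set.Ioc (0:ℝ) 1)) with hi | hi
    · have hifhat : IntegrableOn (fun x => Bf fhat u x) (Set.Ioc (0:ℝ) 1) := by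
        have heq : (fun x => Bf fhat u x) =
            fun x => Bf f u x + (Bf fhat u x - Bf f u x) := by
          funext x
          ring
        rw [heq]
        exact hi.add hBdiff_int
      rw [← integral_sub hifhat hi]
      calc |∫ x in Set.Ioc (0:ℝ) 1, (Bf fhat u x - Bf f u x)|
          ≤ ∫ x in Set.Ioc (0:ℝ) 1, |Bf fhat u x - Bf f u x| := by
            have := norm_integral_le_integral_norm (μ := volume.restrict (Set.Ioc (0:ℝ) 1))
              (f := fun x => Bf fhat u x - Bf f u x)
            simpa [Real.norm_eq_abs] using this
        _ ≤ ∫ x in Set.Ioc (0:ℝ) 1, γ x * β := by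
            apply setIntegral_mono_on hBdiff_int.abs (hγint.mul_const β)
              measurableSet_Ioc
            intro x hx
            exact hBdiff_bd x ⟨hx.1.le, hx.2⟩
        _ = (∫ x in Set.Ioc (0:ℝ) 1, γ x) * β := integral_mul_const _ _
        _ ≤ 1 * β := mul_le_mul_of_nonneg_right hγle1 hβ0
        _ = β := one_mul β
    · have hifhat : ¬ IntegrableOn (fun x => Bf fhat u x) (Set.Ioc (0:ℝ) 1) := by
        intro hcon
        apply hi
        have heq : (fun x => Bf f u x) =
            fun x => Bf fhat u x - (Bf fhat u x - Bf f u x) := by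
          funext x
          ring
        rw [heq]
        exact hcon.sub hBdiff_int
      rw [integral_undef hi, integral_undef hifhat, sub_self, abs_zero]
      exact hβ0
  -- Step A : pointwise bound on A difference
  have hAdiff_bd : ∀ u ∈ Set.Ioc (0:ℝ) 1,
      |Af fhat u - Af f u| ≤ ζ * m * E1 * πI u := by
    intro u hu
    have heq : Af fhat u - Af f u = (ρ * πI u + (1 - ρ)) *
        ((∫ x in (0:ℝ)..1, Bf fhat u x) - ∫ x in (0:ℝ)..1, Bf f u x) := by
      rw [hAfdef]
      ring
    rw [heq, abs_mul, abs_of_nonneg (hden u).le]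
    calc (ρ * πI u + (1 - ρ)) *
          |(∫ x in (0:ℝ)..1, Bf fhat u x) - ∫ x in (0:ℝ)..1, Bf f u x|
        ≤ (ρ * πI u + (1 - ρ)) *
          ((ζ * πI u / (ρ * πI u + (1 - ρ))) * (m * E1)) :=
          mul_le_mul_of_nonneg_left (hXdiff u hu) (hden u).le
      _ = ζ * m * E1 * πI u := by
          have hrw : (ρ * πI u + (1 - ρ)) *
              ((ζ * πI u / (ρ * πI u + (1 - ρ))) * (m * E1)) =
              (ρ * πI u + (1 - ρ)) / (ρ * πI u + (1 - ρ)) *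
                (ζ * πI u * (m * E1)) := by
            ring
          rw [hrw, div_self (hden u).ne']
          ring
  -- measurability of Af
  have hAmeas : ∀ h : ℝ → ℝ → ℝ, Measurable (Function.uncurry h) →
      Measurable (Af h) := by
    intro h hh
    have h1 : StronglyMeasurable
        (fun u => ∫ x in Set.Ioc (0:ℝ) 1, Bf h u x) := by
      exact ((hBmeas h hh).stronglyMeasurable).integral_prod_right'
        (ν := volume.restrict (Set.Ioc (0:ℝ) 1))
    have heq : Af h = fun u => (ρ * πI u + (1 - ρ)) *
        ∫ x in Set.Ioc (0:ℝ) 1, Bf h u x := by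
      funext u
      rw [hAfdef]
      simp only
      rw [intervalIntegral.integral_of_le zero_le_one]
    rw [heq]
    exact (((hπImeas.const_mul ρ).add_const (1 - ρ)).mul h1.measurable)
  have hφint : IntegrableOn (fun u => ζ * m * E1 * πI u) (Set.Ioc (0:ℝ) 1) :=
    (hπIint.integrableOn).const_mul _
  have hAdiff_meas : Measurable (fun u => Af fhat u - Af f u) :=
    (hAmeas fhat hfhatmeas).sub (hAmeas f hfmeas)
  have hAdiff_int : IntegrableOn (fun u => Af fhat u - Af f u) (Set.Ioc (0:ℝ) 1) := by
    apply Integrable.mono' (g := fun u => ζ * m * E1 * πI u) hφint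
      hAdiff_meas.aestronglyMeasurable
    rw [ae_restrict_iff' measurableSet_Ioc]
    apply Filter.Eventually.of_forall
    intro u hu
    rw [Real.norm_eq_abs]
    exact hAdiff_bd u hu
  -- final assembly
  have htarget : ζ * m * E1 = m * ζ / ρ * (Real.exp ρ - 1) := by
    rw [hE1def]
    ring
  have hRHS0 : 0 ≤ m * ζ / ρ * (Real.exp ρ - 1) := by
    apply mul_nonneg (div_nonneg (mul_nonneg hm.le hζ.le) hρ0.le)
    linarith
  rw [hIA fhat, hIA f, intervalIntegral.integral_of_le zero_le_one,
    intervalIntegral.integral_of_le zero_le_one]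
  rcases Classical.em (IntegrableOn (Af f) (Set.Ioc (0:ℝ) 1)) with hi | hi
  · have hifhat : IntegrableOn (Af fhat) (Set.Ioc (0:ℝ) 1) := by
      have heq : Af fhat = fun u => Af f u + (Af fhat u - Af f u) := by
        funext u
        ring
      rw [heq]
      exact hi.add hAdiff_int
    rw [← integral_sub hifhat hi]
    calc |∫ u in Set.Ioc (0:ℝ) 1, (Af fhat u - Af f u)|
        ≤ ∫ u in Set.Ioc (0:ℝ) 1, |Af fhat u - Af f u| := by
          have := norm_integral_le_integral_norm (μ := volume.restrict (Set.Ioc (0:ℝ) 1))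
            (f := fun u => Af fhat u - Af f u)
          simpa [Real.norm_eq_abs] using this
      _ ≤ ∫ u in Set.Ioc (0:ℝ) 1, ζ * m * E1 * πI u := by
          apply setIntegral_mono_on hAdiff_int.abs hφint measurableSet_Ioc
          intro u hu
          exact hAdiff_bd u hu
      _ = ζ * m * E1 * ∫ u in Set.Ioc (0:ℝ) 1, πI u := integral_const_mul _ _
      _ = ζ * m * E1 := by
          rw [← intervalIntegral.integral_of_le zero_le_one, hπI1, mul_one]
      _ = m * ζ / ρ * (Real.exp ρ - 1) := htarget
  · have hifhat : ¬ IntegrableOn (Af fhat) (Set.Ioc (0:ℝ) 1) := by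
      intro hcon
      apply hi
      have heq : Af f = fun u => Af fhat u - (Af fhat u - Af f u) := by
        funext u
        ring
      rw [heq]
      exact hcon.sub hAdiff_int
    rw [integral_undef hi, integral_undef hifhat, sub_self, abs_zero]
    exact hRHS0
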